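/- Let C be a category, let P be a simplicial-set–style pushout of index categories realized as follows: suppose a diagram d in C is indexed by a category P which is the pushout of categories Z ← X → Y along functors, and suppose C-valued restricted diagrams d_X, d_Y, d_Z admit limits ℓ_X, ℓ_Y, ℓ_Z respectively, with canonical comparison morphisms ℓ_Y → ℓ_X ← ℓ_Z induced by restriction of cones. If the cospan ℓ_Y → ℓ_X ← ℓ_Z admits a pullback ℓ in C, then ℓ is a limit of the diagram d : P ⥤ C, provided the pushout square of categories induces an isomorphism of cone categories Cone(d) ≅ Cone(d_Z) ×_{Cone(d_X)} Cone(d_Y). -/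

import Mathlib

open CategoryTheory CategoryTheory.Limits

universe v u v' u'

/-- Extend a cone along a morphism into its point. -/
def extendCone' {J : Type u'} [Category.{v'} J] {C : Type u} [Category.{v} C]
    {F : J ⥤ C} (c : Cone F) {W : C} (f : W ⟶ c.pt) : Cone F where
  pt := W
  π :=
    { app := fun j => f ≫ c.π.app j
      naturality := fun j j' g => by
        dsimp
        rw [Category.id_comp, Category.assoc, c.w g] }

/-- Two cones with equal points and compatible legs are equal. -/
theorem coneEq' {J : Type u'} [Category.{v'} J] {C : Type u} [Category.{v} C]
    {F : J ⥤ C} {s t : Cone F} (h : s.pt = t.pt)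
    (h2 : ∀ j, s.π.app j = eqToHom h ≫ t.π.app j) : s = t := by
  obtain ⟨sp, sπ⟩ := s
  obtain ⟨tp, tπ⟩ := t
  dsimp at h
  subst h
  have : sπ = tπ := by
    ext j
    simpa using h2 j
  rw [this]

/-- Extract the legs equality from an equality of cones. -/
theorem cone_eq_app' {J : Type u'} [Category.{v'} J] {C : Type u} [Category.{v} C]
    {F : J ⥤ C} {s t : Cone F} (h : s = t) (j : J) :
    s.π.app j = eqToHom (congrArg Cone.pt h) ≫ t.π.app j := by
  subst h; simp

/-- Legs of a cone at equal objects agree up to `eqToHom`. -/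
theorem cone_app_eqToHom' {J : Type u'} [Category.{v'} J] {C : Type u} [Category.{v} C]
    {F : J ⥤ C} (c : Cone F) {p q : J} (h : p = q) :
    c.π.app p ≫ eqToHom (congrArg F.obj h) = c.π.app q := by
  subst h; simp

/-- Inductive construction of limits over a pushout of index categories: if the index
category `P` is a pushout of categories `Z ⟵ X ⟶ Y` (with `jY : Y ⥤ P`, `jZ : Z ⥤ P`,
`iY ⋙ jY = iZ ⋙ jZ`), a diagram `d : P ⥤ C` restricts to diagrams with limit cones
`cY`, `cZ`, `cX`, the canonical comparison morphisms `u : cY.pt ⟶ cX.pt`,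
`v : cZ.pt ⟶ cX.pt` are induced by restriction of cones, the cospan `u, v` admits a
pullback `pb` in `C`, and cones over `d` correspond to compatible pairs of cones over the
restrictions to `Y` and `Z` (the pushout square induces an isomorphism
`Cone(d) ≅ Cone(d_Z) ×_{Cone(d_X)} Cone(d_Y)`), then `pb` is a limit of `d`. -/
theorem limit_of_pushout_of_index_categories
    {C : Type u} [Category.{v} C]
    {X Y Z P : Type u'} [Category.{v'} X] [Category.{v'} Y] [Category.{v'} Z]
    [Category.{v'} P]
    (iY : X ⥤ Y) (iZ : X ⥤ Z) (jY : Y ⥤ P) (jZ : Z ⥤ P)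
    (hsq : iY ⋙ jY = iZ ⋙ jZ)
    (d : P ⥤ C)
    -- limits of the restricted diagrams
    (cY : Cone (jY ⋙ d)) (hY : IsLimit cY)
    (cZ : Cone (jZ ⋙ d)) (hZ : IsLimit cZ)
    (cX : Cone (iY ⋙ jY ⋙ d)) (hX : IsLimit cX)
    -- the canonical comparison morphisms, characterised by compatibility with the cones
    (u : cY.pt ⟶ cX.pt) (hu : ∀ x : X, u ≫ cX.π.app x = cY.π.app (iY.obj x))
    (v : cZ.pt ⟶ cX.pt)
    (hv : ∀ x : X, v ≫ cX.π.app x =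
      cZ.π.app (iZ.obj x) ≫
        eqToHom (congrArg d.obj (Functor.congr_obj hsq x).symm))
    -- the pullback of the comparison cospan
    {pb : C} (π₁ : pb ⟶ cY.pt) (π₂ : pb ⟶ cZ.pt) (hpb : IsPullback π₁ π₂ u v)
    -- cones over `d` correspond to compatible pairs of cones over the restrictions
    (hcones : ∀ (c₁ : Cone (jY ⋙ d)) (c₂ : Cone (jZ ⋙ d)) (hpt : c₁.pt = c₂.pt),
      (∀ x : X, c₁.π.app (iY.obj x) =
          eqToHom hpt ≫ c₂.π.app (iZ.obj x) ≫
            eqToHom (congrArg d.obj (Functor.congr_obj hsq x).symm)) →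
        ∃! c : Cone d, Cone.whisker jY c = c₁ ∧ Cone.whisker jZ c = c₂) :
    ∃ c : Cone d, c.pt = pb ∧ Nonempty (IsLimit c) := by
  -- compatibility of extended cones
  have compat : ∀ {A : C} (a : A ⟶ cY.pt) (b : A ⟶ cZ.pt), a ≫ u = b ≫ v →
      ∀ x : X, (extendCone' cY a).π.app (iY.obj x) =
        eqToHom rfl ≫ (extendCone' cZ b).π.app (iZ.obj x) ≫
          eqToHom (congrArg d.obj (Functor.congr_obj hsq x).symm) := by
    intro A a b hab x
    have : a ≫ cY.π.app (iY.obj x) =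
        b ≫ cZ.π.app (iZ.obj x) ≫
          eqToHom (congrArg d.obj (Functor.congr_obj hsq x).symm) := by
      rw [← hu x, ← hv x, ← Category.assoc, ← Category.assoc, hab]
    exact this.trans ((Category.assoc _ _ _).symm.trans (Category.id_comp _).symm)
  -- the cone over `pb`
  obtain ⟨c, ⟨eY, eZ⟩, uq⟩ := hcones (extendCone' cY π₁) (extendCone' cZ π₂) rfl
    (compat π₁ π₂ hpb.w)
  have hpt : c.pt = pb := congrArg Cone.pt eY
  have hπY : ∀ y : Y, c.π.app (jY.obj y) = eqToHom hpt ≫ π₁ ≫ cY.π.app y := by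
    intro y
    exact cone_eq_app' eY y
  have hπZ : ∀ z : Z, c.π.app (jZ.obj z) = eqToHom hpt ≫ π₂ ≫ cZ.π.app z := by
    intro z
    exact cone_eq_app' eZ z
  refine ⟨c, hpt, ⟨?_⟩⟩
  -- data for an arbitrary cone `s`
  have key : ∀ s : Cone d, ∃ f : s.pt ⟶ pb,
      (f ≫ π₁ = hY.lift (Cone.whisker jY s) ∧ f ≫ π₂ = hZ.lift (Cone.whisker jZ s)) ∧
      s = extendCone' c (f ≫ eqToHom hpt.symm) := by
    intro s
    set fY := hY.lift (Cone.whisker jY s) with hfY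
    set fZ := hZ.lift (Cone.whisker jZ s) with hfZ
    have hfacY : ∀ y : Y, fY ≫ cY.π.app y = s.π.app (jY.obj y) :=
      fun y => hY.fac (Cone.whisker jY s) y
    have hfacZ : ∀ z : Z, fZ ≫ cZ.π.app z = s.π.app (jZ.obj z) :=
      fun z => hZ.fac (Cone.whisker jZ s) z
    have hw : fY ≫ u = fZ ≫ v := by
      apply hX.hom_ext
      intro x
      rw [Category.assoc, Category.assoc, hu x, hv x, hfacY, ← Category.assoc, hfacZ]
      exact (cone_app_eqToHom' s (Functor.congr_obj hsq x).symm).symm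
    refine ⟨hpb.lift fY fZ hw, ⟨hpb.lift_fst fY fZ hw, hpb.lift_snd fY fZ hw⟩, ?_⟩
    -- uniqueness from `hcones`
    obtain ⟨cs, _, uqs⟩ := hcones (extendCone' cY fY) (extendCone' cZ fZ) rfl
      (compat fY fZ hw)
    have h1 : Cone.whisker jY s = extendCone' cY fY := by
      refine coneEq' rfl ?_
      intro y
      simpa [extendCone'] using (hfacY y).symm
    have h2 : Cone.whisker jZ s = extendCone' cZ fZ := by
      refine coneEq' rfl ?_
      intro z
      simpa [extendCone'] using (hfacZ z).symm
    have hℓ : hpb.lift fY fZ hw ≫ eqToHom hpt.symm ≫ eqToHom hpt = hpb.lift fY fZ hw := by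
      simp
    have h1' : Cone.whisker jY (extendCone' c (hpb.lift fY fZ hw ≫ eqToHom hpt.symm)) =
        extendCone' cY fY := by
      refine coneEq' rfl ?_
      intro y
      show (hpb.lift fY fZ hw ≫ eqToHom hpt.symm) ≫ c.π.app (jY.obj y) = _
      rw [hπY y]
      simp [hpb.lift_fst fY fZ hw, extendCone']
      exact (Category.id_comp _).symm
    have h2' : Cone.whisker jZ (extendCone' c (hpb.lift fY fZ hw ≫ eqToHom hpt.symm)) =
        extendCone' cZ fZ := by
      refine coneEq' rfl ?_
      intro z
      show (hpb.lift fY fZ hw ≫ eqToHom hpt.symm) ≫ c.π.app (jZ.obj z) = _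
      rw [hπZ z]
      simp [hpb.lift_snd fY fZ hw, extendCone']
      exact (Category.id_comp _).symm
    exact (uqs s ⟨h1, h2⟩).trans (uqs _ ⟨h1', h2'⟩).symm
  refine
    { lift := fun s => (key s).choose ≫ eqToHom hpt.symm
      fac := fun s p => ?_
      uniq := fun s m hm => ?_ }
  · have h := cone_eq_app' (key s).choose_spec.2 p
    rw [h]
    simp [extendCone']
    exact (Category.id_comp _).symm
  · obtain ⟨⟨hf1, hf2⟩, _⟩ := (key s).choose_spec
    have : m ≫ eqToHom hpt = (key s).choose := by
      apply hpb.hom_ext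
      · apply hY.hom_ext
        intro y
        rw [hf1]
        have := hY.fac (Cone.whisker jY s) y
        simp only [Category.assoc]
        rw [this]
        have := hm (jY.obj y)
        rw [hπY y] at this
        simpa using this
      · apply hZ.hom_ext
        intro z
        rw [hf2]
        have := hZ.fac (Cone.whisker jZ s) z
        simp only [Category.assoc]
        rw [this]
        have := hm (jZ.obj z)
        rw [hπZ z] at this
        simpa using this
    show m = (key s).choose ≫ eqToHom hpt.symm
    rw [← this]
    simp
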